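/- For every finite connected simple graph G, the chromatic number χ(G) satisfies χ(G) ≤ C_G^0 = 1 + r(A_G), where r(A_G) is the spectral radius of the adjacency matrix. -/

import Mathlib

open Matrix in
lemma rayleigh_aux {n : Type*} [Fintype n] [DecidableEq n] {A : Matrix n n ℝ}
    (hA : A.IsHermitian) {lam : ℝ} (hlam : ∀ i, hA.eigenvalues i ≤ lam) (x : n → ℝ) :
    x ⬝ᵥ (A *ᵥ x) ≤ lam * (x ⬝ᵥ x) := by
  set U : Matrix n n ℝ := (hA.eigenvectorUnitary : Matrix n n ℝ) with hU
  set y : n → ℝ := star U *ᵥ x with hy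
  have hcross : x ᵥ* U = y := by
    rw [hy, ← Matrix.mulVec_transpose]
    congr 1
  have hDiag : (diagonal (RCLike.ofReal ∘ hA.eigenvalues) : Matrix n n ℝ)
      = diagonal hA.eigenvalues := by
    congr 1
  have h1 : x ⬝ᵥ (A *ᵥ x) = y ⬝ᵥ (diagonal hA.eigenvalues *ᵥ y) := by
    conv_lhs => rw [hA.spectral_theorem, Unitary.conjStarAlgAut_apply]
    rw [← Matrix.mulVec_mulVec, ← Matrix.mulVec_mulVec, Matrix.dotProduct_mulVec, hcross, hDiag]
  have h2 : y ⬝ᵥ y = x ⬝ᵥ x := by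
    calc y ⬝ᵥ y = (x ᵥ* U) ⬝ᵥ (star U *ᵥ x) := by rw [hcross]
    _ = x ⬝ᵥ x := by
        rw [Matrix.dotProduct_mulVec, Matrix.vecMul_vecMul,
          (Matrix.mem_unitaryGroup_iff).mp hA.eigenvectorUnitary.2, Matrix.vecMul_one]
  rw [h1, ← h2]
  unfold dotProduct
  rw [Finset.mul_sum]
  apply Finset.sum_le_sum
  intro i _
  rw [Matrix.mulVec_diagonal]
  nlinarith [hlam i, mul_self_nonneg (y i)]

lemma colorable_of_degeneracy {V : Type*} [Fintype V] [DecidableEq V] (G : SimpleGraph V)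
    [DecidableRel G.Adj] (d : ℕ)
    (h : ∀ S : Finset V, S.Nonempty → ∃ v ∈ S, (S.filter (G.Adj v)).card ≤ d) :
    G.Colorable (d + 1) := by
  have key : ∀ S : Finset V, ∃ c : V → Fin (d + 1),
      ∀ u ∈ S, ∀ w ∈ S, G.Adj u w → c u ≠ c w := by
    intro S
    induction S using Finset.strongInductionOn with
    | _ S ih =>
      rcases S.eq_empty_or_nonempty with rfl | hS
      · exact ⟨fun _ => 0, by simp⟩
      obtain ⟨v, hv, hdeg⟩ := h S hS
      obtain ⟨c, hc⟩ := ih (S.erase v) (Finset.erase_ssubset hv)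
      set N : Finset V := (S.erase v).filter (G.Adj v) with hN
      have hNd : N.card ≤ d := by
        refine le_trans (Finset.card_le_card ?_) hdeg
        intro x hx
        simp only [hN, Finset.mem_filter, Finset.mem_erase] at hx ⊢
        exact ⟨hx.1.2, hx.2⟩
      have himg : (N.image c).card < Fintype.card (Fin (d + 1)) := by
        rw [Fintype.card_fin]
        exact lt_of_le_of_lt (le_trans Finset.card_image_le hNd) (Nat.lt_succ_self d)
      have hcompl : ((N.image c)ᶜ : Finset (Fin (d + 1))).Nonempty := by
        rw [← Finset.card_pos, Finset.card_compl]
        omega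
      obtain ⟨a, ha'⟩ := hcompl
      have ha : a ∉ N.image c := Finset.mem_compl.mp ha'
      refine ⟨Function.update c v a, ?_⟩
      intro u hu w hw hadj
      by_cases hu' : u = v <;> by_cases hw' : w = v
      · rw [hu', hw'] at hadj
        exact absurd hadj (G.loopless.irrefl v)
      · rw [hu', Function.update_self, Function.update_of_ne hw']
        rw [hu'] at hadj
        intro heq
        exact ha (heq ▸ Finset.mem_image_of_mem c
          (by simp [hN, Finset.mem_erase, hw', hw, hadj]))
      · rw [hw', Function.update_self, Function.update_of_ne hu']
        rw [hw'] at hadj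
        intro heq
        exact ha (heq ▸ Finset.mem_image_of_mem c
          (by simp [hN, Finset.mem_erase, hu', hu, hadj.symm]))
      · rw [Function.update_of_ne hu', Function.update_of_ne hw']
        exact hc u (Finset.mem_erase.mpr ⟨hu', hu⟩) w (Finset.mem_erase.mpr ⟨hw', hw⟩) hadj
  obtain ⟨c, hc⟩ := key Finset.univ
  exact ⟨SimpleGraph.Coloring.mk c fun {u w} hadj =>
    hc u (Finset.mem_univ u) w (Finset.mem_univ w) hadj⟩

open Matrix in
private lemma ite_sum_card {V : Type*} [Fintype V] [DecidableEq V] (S : Finset V)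
    (p : V → Prop) [DecidablePred p] :
    ∑ w : V, (if p w then (1:ℝ) else 0) * (if w ∈ S then 1 else 0) = ((S.filter p).card : ℝ) := by
  rw [Finset.sum_congr rfl (fun w _ => by split_ifs <;> simp_all :
    ∀ w ∈ Finset.univ, (if p w then (1:ℝ) else 0) * (if w ∈ S then 1 else 0)
      = if w ∈ S ∧ p w then (1:ℝ) else 0)]
  rw [Finset.sum_boole]
  congr 1
  rw [← Finset.filter_filter]
  congr 1
  simp

private lemma ite_sum_restrict {V : Type*} [Fintype V] [DecidableEq V] (S : Finset V)
    (c : V → ℝ) :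
    ∑ u : V, (if u ∈ S then (1:ℝ) else 0) * c u = ∑ u ∈ S, c u := by
  rw [Finset.sum_congr rfl (fun u _ => by split_ifs <;> simp_all :
    ∀ u ∈ Finset.univ, (if u ∈ S then (1:ℝ) else 0) * c u = if u ∈ S then c u else 0)]
  simp [Finset.sum_ite_mem]

open Matrix in
theorem stmt_5_aux {V : Type*} [Fintype V] [DecidableEq V] (G : SimpleGraph V)
    [DecidableRel G.Adj] (hG : G.Connected) :
    (G.chromaticNumber.toNat : ℝ) ≤ 1 + sSup (spectrum ℝ (G.adjMatrix ℝ)) := by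
  haveI : Nonempty V := hG.nonempty
  set A : Matrix V V ℝ := G.adjMatrix ℝ with hAdef
  have hA : A.IsHermitian := by
    rw [Matrix.IsHermitian, Matrix.conjTranspose_eq_transpose_of_trivial]
    exact G.isSymm_adjMatrix
  set lam : ℝ := sSup (spectrum ℝ A) with hlamdef
  have hspec : spectrum ℝ A = Set.range hA.eigenvalues := hA.spectrum_real_eq_range_eigenvalues
  have hbdd : BddAbove (spectrum ℝ A) := Matrix.finite_real_spectrum.bddAbove
  have hlam : ∀ i, hA.eigenvalues i ≤ lam := fun i =>
    le_csSup hbdd (hspec ▸ Set.mem_range_self i)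
  -- quadratic form of indicator vectors
  have hform : ∀ S : Finset V,
      (fun u => if u ∈ S then (1:ℝ) else 0) ⬝ᵥ (A *ᵥ (fun u => if u ∈ S then (1:ℝ) else 0))
        = ∑ u ∈ S, ((S.filter (G.Adj u)).card : ℝ) := by
    intro S
    have inner : ∀ u, (A *ᵥ (fun w => if w ∈ S then (1:ℝ) else 0)) u
        = ((S.filter (G.Adj u)).card : ℝ) := by
      intro u
      simp only [Matrix.mulVec, dotProduct, hAdef, SimpleGraph.adjMatrix_apply]
      exact ite_sum_card S (G.Adj u)
    unfold dotProduct
    rw [Finset.sum_congr rfl fun u _ => by rw [inner u]]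
    exact ite_sum_restrict S _
  have hnorm : ∀ S : Finset V,
      (fun u => if u ∈ S then (1:ℝ) else 0) ⬝ᵥ (fun u => if u ∈ S then (1:ℝ) else 0)
        = (S.card : ℝ) := by
    intro S
    unfold dotProduct
    rw [Finset.sum_congr rfl (fun u _ => by split_ifs <;> simp_all :
      ∀ u ∈ Finset.univ, (if u ∈ S then (1:ℝ) else 0) * (if u ∈ S then (1:ℝ) else 0)
        = if u ∈ S then (1:ℝ) else 0)]
    rw [Finset.sum_boole]
    congr 1
    simp
  -- lam is nonnegative
  have hlam0 : 0 ≤ lam := by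
    obtain ⟨v⟩ := ‹Nonempty V›
    have h := rayleigh_aux hA hlam (fun u => if u ∈ ({v} : Finset V) then (1:ℝ) else 0)
    rw [hform, hnorm] at h
    simp at h
    nlinarith [h]
  set d : ℕ := ⌊lam⌋₊ with hddef
  -- degeneracy bound
  have hdeg : ∀ S : Finset V, S.Nonempty → ∃ v ∈ S, (S.filter (G.Adj v)).card ≤ d := by
    intro S hS
    by_contra hcon
    push_neg at hcon
    have h := rayleigh_aux hA hlam (fun u => if u ∈ S then (1:ℝ) else 0)
    rw [hform, hnorm] at h
    have hlb : ((d:ℝ) + 1) * S.card ≤ ∑ u ∈ S, ((S.filter (G.Adj u)).card : ℝ) := by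
      rw [mul_comm]
      calc ((S.card : ℝ)) * ((d:ℝ)+1) = ∑ _u ∈ S, ((d:ℝ)+1) := by
            rw [Finset.sum_const, nsmul_eq_mul]
        _ ≤ ∑ u ∈ S, ((S.filter (G.Adj u)).card : ℝ) := by
            apply Finset.sum_le_sum
            intro u hu
            have := hcon u hu
            -- cast
            exact_mod_cast Nat.succ_le_of_lt this
    have hcard : (1:ℝ) ≤ S.card := by exact_mod_cast hS.card_pos
    have hflt : lam < (d:ℝ) + 1 := by exact_mod_cast Nat.lt_floor_add_one lam
    nlinarith
  have hcol : G.Colorable (d + 1) := colorable_of_degeneracy G d hdeg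
  have hch : G.chromaticNumber ≤ (d + 1 : ℕ) := hcol.chromaticNumber_le
  have htn : G.chromaticNumber.toNat ≤ d + 1 := by
    have := ENat.toNat_le_toNat hch (ENat.coe_ne_top (d+1))
    rwa [ENat.toNat_natCast] at this
  calc (G.chromaticNumber.toNat : ℝ) ≤ ((d : ℝ) + 1) := by exact_mod_cast htn
    _ ≤ 1 + lam := by
        have := Nat.floor_le hlam0
        rw [← hddef] at this
        linarith

/-- for every finite connected graph, the chromatic number is at most
`C_G^0 = 1 + r(A_G)`, where `r(A_G)` is the spectral radius of the adjacency matrix. -/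
theorem stmt_5 {V : Type*} [Fintype V] [DecidableEq V] (G : SimpleGraph V)
    [DecidableRel G.Adj] (hG : G.Connected) :
    (G.chromaticNumber.toNat : ℝ) ≤ 1 + sSup (spectrum ℝ (G.adjMatrix ℝ)) := by
  exact stmt_5_aux G hG
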